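/- Let A be a proper connective dg algebra and d ≥ 1. The extriangulated category per(A)^{[-d,0]} is (d-1)-Auslander: it has enough projectives, enough injectives, positive global dimension at most d, and dominant dimension at least d; for each projective P ∈ add(A), a minimal injective coresolution is given by the conflations P ↣ 0 ↠ P[1], P[1] ↣ 0 ↠ P[2], ..., P[d-1] ↣ 0 ↠ P[d], P[d] ↣ P[d] ↠ 0, whose first d terms are projective-injective. -/

import Mathlib

open CategoryTheory Category Limits Pretriangulated Triangulated ZeroObject

universe w v u

namespace Paper

section Defs

variable {C : Type u} [Category.{v} C] [Preadditive C] [HasZeroObject C]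
  [HasShift C ℤ] [∀ n : ℤ, (shiftFunctor C n).Additive] [Pretriangulated C]
  [HasFiniteBiproducts C] [HasBinaryBiproducts C]

/-- `X` lies in `add A`: it is a direct summand of a finite direct sum of copies of `A`. -/
def inAdd (A X : C) : Prop :=
  ∃ (n : ℕ) (s : X ⟶ ⨁ fun _ : Fin n => A) (p : (⨁ fun _ : Fin n => A) ⟶ X), s ≫ p = 𝟙 X

/-- The star operation `S ∗ T` on classes of objects of a (pre)triangulated category:
objects `E` admitting a distinguished triangle `X ⟶ E ⟶ Y ⟶ X⟦1⟧` with `X ∈ S`, `Y ∈ T`. -/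
def star (S T : Set C) : Set C :=
  {E | ∃ (X : C) (_ : X ∈ S) (Y : C) (_ : Y ∈ T) (f : X ⟶ E) (g : E ⟶ Y)
    (h : Y ⟶ X⟦(1 : ℤ)⟧), Triangle.mk f g h ∈ distTriang C}

/-- `add (A⟦i⟧)` as a class of objects. -/
def addShift (A : C) (i : ℤ) : Set C := {X | inAdd (A⟦i⟧) X}

/-- `per(A)^{[-n,0]} = add(A) ∗ add(A)[1] ∗ ⋯ ∗ add(A)[n]`. -/
def perInterval (A : C) : ℕ → Set C
  | 0 => addShift A 0
  | n + 1 => star (perInterval A n) (addShift A (n + 1))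

/-- `thick(DA)^{[0,n]} = add(DA)[-n] ∗ ⋯ ∗ add(DA)[-1] ∗ add(DA)`. -/
def coInterval (DA : C) : ℕ → Set C
  | 0 => addShift DA 0
  | n + 1 => star (addShift DA (-(n + 1 : ℕ))) (coInterval DA n)

/-- The extended heart `H^d = T^{≤ 0} ∩ T^{> -d}`. -/
def Hd (t : TStructure C) (d : ℕ) : Set C := {X | t.le 0 X ∧ t.ge (1 - (d : ℤ)) X}

/-- Projectivity in the extriangulated category given by an extension-closed class `S`:
`E(P, X) = Hom(P, X⟦1⟧)` vanishes for all `X ∈ S`. -/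
def projOn (S : Set C) (P : C) : Prop := ∀ X ∈ S, ∀ f : P ⟶ X⟦(1 : ℤ)⟧, f = 0

/-- Injectivity in the extriangulated category given by an extension-closed class `S`. -/
def injOn (S : Set C) (I : C) : Prop := ∀ X ∈ S, ∀ f : X ⟶ I⟦(1 : ℤ)⟧, f = 0

/-- `p : M ⟶ N` is a deflation for the extriangulated structure on the extension-closed
class `S`: it is the second map of a distinguished triangle with all terms in `S`. -/
def isDeflation (S : Set C) {M N : C} (p : M ⟶ N) : Prop :=
  ∃ (L : C) (_ : L ∈ S) (f : L ⟶ M) (h : N ⟶ L⟦(1 : ℤ)⟧),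
    Triangle.mk f p h ∈ distTriang C

/-- `i : L ⟶ M` is an inflation for the extriangulated structure on `S`. -/
def isInflation (S : Set C) {L M : C} (i : L ⟶ M) : Prop :=
  ∃ (N : C) (_ : N ∈ S) (p : M ⟶ N) (h : N ⟶ L⟦(1 : ℤ)⟧),
    Triangle.mk i p h ∈ distTriang C

/-- `f` factors through an object of `add W`. -/
def factorsThruAdd (W : C) {X Y : C} (f : X ⟶ Y) : Prop :=
  ∃ (Q : C) (_ : inAdd W Q) (a : X ⟶ Q) (b : Q ⟶ Y), f = a ≫ b

/-- An indecomposable object: nonzero, and in any direct sum decomposition one summand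
vanishes. -/
def Indec (X : C) : Prop :=
  ¬ IsZero X ∧ ∀ Y Z : C, Nonempty (X ≅ Y ⊞ Z) → IsZero Y ∨ IsZero Z

/-- Data of the truncation functor `t^{≥ n}`, left adjoint to the inclusion of `T^{≥ n}`,
together with its unit and the truncation triangles. -/
structure TruncGEData (t : TStructure C) (n : ℤ) where
  F : C ⥤ C
  η : 𝟭 C ⟶ F
  ge : ∀ X : C, t.ge n (F.obj X)
  tri : ∀ X : C, ∃ (Z : C) (_ : t.le (n - 1) Z) (f : Z ⟶ X) (h : F.obj X ⟶ Z⟦(1 : ℤ)⟧),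
    Triangle.mk f (η.app X) h ∈ distTriang C
  adj : ∀ (X W : C), t.ge n W → Function.Bijective (fun g : F.obj X ⟶ W => η.app X ≫ g)

/-- Data of the truncation functor `t^{≤ n}`, right adjoint to the inclusion of `T^{≤ n}`,
together with its counit and the truncation triangles. -/
structure TruncLEData (t : TStructure C) (n : ℤ) where
  F : C ⥤ C
  ε : F ⟶ 𝟭 C
  le : ∀ X : C, t.le n (F.obj X)
  tri : ∀ X : C, ∃ (Z : C) (_ : t.ge (n + 1) Z) (g : X ⟶ Z) (h : Z ⟶ (F.obj X)⟦(1 : ℤ)⟧),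
    Triangle.mk (ε.app X) g h ∈ distTriang C
  adj : ∀ (W X : C), t.le n W → Function.Bijective (fun g : W ⟶ F.obj X => g ≫ ε.app X)

/-- Membership in the thick subcategory generated by `A`. -/
inductive thickMem (A : C) : C → Prop
  | base : thickMem A A
  | zero : thickMem A 0
  | iso {X Y : C} : (X ≅ Y) → thickMem A X → thickMem A Y
  | shift (X : C) (n : ℤ) : thickMem A X → thickMem A (X⟦n⟧)
  | ext₂ {X Y Z : C} {f : X ⟶ Y} {g : Y ⟶ Z} {h : Z ⟶ X⟦(1 : ℤ)⟧} :
      (Triangle.mk f g h ∈ distTriang C) → thickMem A X → thickMem A Z → thickMem A Y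
  | smd {X Y : C} (s : X ⟶ Y) (p : Y ⟶ X) : s ≫ p = 𝟙 X → thickMem A Y → thickMem A X

end Defs

/-- Abstraction of the derived category `D^fd(A)` of a proper connective dg algebra `A`
over a field `k`, with its standard t-structure: `A` is connective (cohomology in
non-positive degrees), Hom-spaces are finite dimensional (properness), the standard
t-structure is bounded on `D^fd`, `A` is derived projective and `A` generates. -/
structure DGSetup (k : Type w) [Field k] (C : Type u) [Category.{v} C] [Preadditive C]
    [HasZeroObject C] [HasShift C ℤ] [∀ n : ℤ, (shiftFunctor C n).Additive]
    [Pretriangulated C] [Linear k C] where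
  t : TStructure C
  A : C
  connective : t.le 0 A
  homFinite : ∀ X Y : C, FiniteDimensional k (X ⟶ Y)
  bounded : ∀ X : C, ∃ a b : ℤ, t.ge a X ∧ t.le b X
  A_derived_projective : ∀ X : C, t.le 0 X → ∀ f : A ⟶ X⟦(1 : ℤ)⟧, f = 0
  generates : ∀ X : C, (∀ (n : ℤ) (f : A⟦n⟧ ⟶ X), f = 0) → IsZero X

section DG

variable {k : Type w} [Field k] {C : Type u} [Category.{v} C] [Preadditive C]
  [HasZeroObject C] [HasShift C ℤ] [∀ n : ℤ, (shiftFunctor C n).Additive]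
  [Pretriangulated C] [Linear k C]

/-- A derived injective object of `D^fd(A)^{≥ 0}`. -/
def DerivedInjective (S : DGSetup k C) (I : C) : Prop :=
  S.t.ge 0 I ∧ ∀ X : C, S.t.ge 0 X → ∀ f : X ⟶ I⟦(1 : ℤ)⟧, f = 0

variable [HasFiniteBiproducts C] [HasBinaryBiproducts C]

/-- The `k`-submodule of morphisms `X ⟶ Y` factoring through `add W`. -/
def addIdeal (k : Type w) [Field k] [Linear k C] (W : C) (X Y : C) : Submodule k (X ⟶ Y) :=
  Submodule.span k {f | factorsThruAdd W f}

end DG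

variable {C : Type u} [Category.{v} C] [Preadditive C] [HasZeroObject C]
  [HasShift C ℤ] [∀ n : ℤ, (shiftFunctor C n).Additive] [Pretriangulated C]
  [HasFiniteBiproducts C] [HasBinaryBiproducts C]
  {k : Type w} [Field k] [Linear k C]


section Aux

set_option linter.unusedSectionVars false

variable {C : Type u} [Category.{v} C] [Preadditive C] [HasZeroObject C]
  [HasShift C ℤ] [∀ n : ℤ, (shiftFunctor C n).Additive] [Pretriangulated C]
  [HasFiniteBiproducts C] [HasBinaryBiproducts C]
  {k : Type w} [Field k] [Linear k C]

lemma comp_iso_zero {X P Q : C} (e : P ≅ Q) {f : X ⟶ P} (h : f ≫ e.hom = 0) : f = 0 := by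
  rw [← comp_id f, ← e.hom_inv_id, ← assoc, h, zero_comp]

lemma inAdd_zero (W : C) : inAdd W (0 : C) :=
  ⟨0, 0, 0, (isZero_zero C).eq_of_src _ _⟩

lemma inAdd_of_retract {W X Y : C} (s : X ⟶ Y) (p : Y ⟶ X) (hsp : s ≫ p = 𝟙 X)
    (hY : inAdd W Y) : inAdd W X := by
  obtain ⟨n, s', p', h⟩ := hY
  refine ⟨n, s ≫ s', p' ≫ p, ?_⟩
  have key : s' ≫ p' ≫ p = p := by rw [← assoc, h, id_comp]
  rw [assoc, key, hsp]

lemma biproduct_shift_retract (m : ℕ) (W : C) (a : ℤ) :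
    ∃ (α : ((⨁ fun _ : Fin m => W) : C)⟦a⟧ ⟶ ⨁ fun _ : Fin m => W⟦a⟧)
      (β : (⨁ fun _ : Fin m => W⟦a⟧) ⟶ ((⨁ fun _ : Fin m => W) : C)⟦a⟧),
      α ≫ β = 𝟙 _ ∧ ∀ j, α ≫ biproduct.π _ j = (biproduct.π (fun _ : Fin m => W) j)⟦a⟧' := by
  refine ⟨biproduct.lift fun j => (biproduct.π _ j)⟦a⟧',
    biproduct.desc fun j => (biproduct.ι (fun _ : Fin m => W) j)⟦a⟧', ?_, fun j => biproduct.lift_π _ _⟩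
  rw [biproduct.lift_desc]
  simp only [← CategoryTheory.Functor.map_comp]
  rw [← CategoryTheory.Functor.map_sum, biproduct.total, CategoryTheory.Functor.map_id]

lemma inAdd_shift {W X : C} (a : ℤ) (h : inAdd W X) : inAdd (W⟦a⟧) (X⟦a⟧) := by
  obtain ⟨n, s, p, hsp⟩ := h
  obtain ⟨α, β, hαβ, -⟩ := biproduct_shift_retract n W a
  refine ⟨n, s⟦a⟧' ≫ α, β ≫ p⟦a⟧', ?_⟩
  have key : α ≫ β ≫ p⟦a⟧' = p⟦a⟧' := by rw [← assoc, hαβ, id_comp]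
  rw [assoc, key, ← CategoryTheory.Functor.map_comp, hsp, CategoryTheory.Functor.map_id]

lemma inAdd_congr {W W' X : C} (e : W ≅ W') (h : inAdd W X) : inAdd W' X := by
  obtain ⟨n, s, p, hsp⟩ := h
  refine ⟨n, s ≫ biproduct.lift fun j => biproduct.π _ j ≫ e.hom,
    (biproduct.lift fun j => biproduct.π _ j ≫ e.inv) ≫ p, ?_⟩
  have h2 : (biproduct.lift fun j => biproduct.π (fun _ : Fin n => W) j ≫ e.hom) ≫
      (biproduct.lift fun j => biproduct.π (fun _ : Fin n => W') j ≫ e.inv) = 𝟙 _ := by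
    apply biproduct.hom_ext
    intro j
    simp
  have key : (biproduct.lift fun j => biproduct.π (fun _ : Fin n => W) j ≫ e.hom) ≫
      (biproduct.lift fun j => biproduct.π (fun _ : Fin n => W') j ≫ e.inv) ≫ p = p := by
    rw [← assoc, h2, id_comp]
  rw [assoc, key, hsp]

lemma hom_to_inAdd_zero {W Q X : C} (hQ : inAdd W Q) {a : ℤ}
    (hv : ∀ g : X ⟶ W⟦a⟧, g = 0) (f : X ⟶ Q⟦a⟧) : f = 0 := by
  obtain ⟨n, s, p, hsp⟩ := hQ
  obtain ⟨α, β, hαβ, hπ⟩ := biproduct_shift_retract n W a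
  have h1 : (f ≫ s⟦a⟧') ≫ α = 0 := by
    apply biproduct.hom_ext
    intro j
    rw [zero_comp, assoc, hπ j]
    exact hv _
  have h2 : f ≫ s⟦a⟧' = 0 := by
    have h3 : f ≫ s⟦a⟧' = ((f ≫ s⟦a⟧') ≫ α) ≫ β := by rw [assoc, hαβ, comp_id]
    rw [h3, h1, zero_comp]
  calc f = (f ≫ s⟦a⟧') ≫ p⟦a⟧' := by
        rw [assoc, ← CategoryTheory.Functor.map_comp, hsp, CategoryTheory.Functor.map_id, comp_id]
    _ = 0 := by rw [h2, zero_comp]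

/-- Projective dimension at most `n` relative to the t-structure. -/
def auxPd (S : DGSetup k C) (X : C) (n : ℤ) : Prop :=
  ∀ Z : C, S.t.le 0 Z → ∀ j : ℤ, n < j → ∀ f : X ⟶ Z⟦j⟧, f = 0

lemma auxLEmono (S : DGSetup k C) {a b : ℤ} (hab : a ≤ b) {X : C} (h : S.t.le a X) :
    S.t.le b X :=
  S.t.le_monotone hab X h

lemma auxPd_mono {S : DGSetup k C} {X : C} {n m : ℤ} (h : auxPd S X n) (hnm : n ≤ m) :
    auxPd S X m :=
  fun Z hZ j hj => h Z hZ j (lt_of_le_of_lt hnm hj)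

lemma auxPd_A (S : DGSetup k C) : auxPd S S.A 0 := by
  intro Z hZ j hj f
  have hle : S.t.le 0 (Z⟦j - 1⟧) :=
    auxLEmono S (by omega) (S.t.le_shift 0 (j - 1) (1 - j) (by ring) Z hZ)
  have h2 := S.A_derived_projective (Z⟦j - 1⟧) hle
    (f ≫ (shiftFunctorAdd' C (j - 1) 1 j (by ring)).hom.app Z)
  have h3 : f = (f ≫ (shiftFunctorAdd' C (j - 1) 1 j (by ring)).hom.app Z) ≫
      (shiftFunctorAdd' C (j - 1) 1 j (by ring)).inv.app Z := by simp
  rw [h3, h2, zero_comp]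

lemma auxPd_shift {S : DGSetup k C} {X : C} {n : ℤ} (h : auxPd S X n) (a : ℤ) :
    auxPd S (X⟦a⟧) (n + a) := by
  intro Z hZ j hj f
  have e1 := (shiftFunctorCompIsoId C a (-a) (add_neg_cancel a)).app X
  have e2 := (shiftFunctorAdd' C j (-a) (j - a) (by ring)).symm.app Z
  have hz : e1.inv ≫ (shiftFunctor C (-a)).map f ≫ e2.hom = 0 :=
    h Z hZ (j - a) (by omega) _
  have h0 : (shiftFunctor C (-a)).map f = 0 := by
    calc (shiftFunctor C (-a)).map f
        = e1.hom ≫ (e1.inv ≫ (shiftFunctor C (-a)).map f ≫ e2.hom) ≫ e2.inv := by simp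
      _ = 0 := by rw [hz, zero_comp, comp_zero]
  exact (shiftFunctor C (-a)).map_injective (by rw [h0, CategoryTheory.Functor.map_zero])

lemma auxPd_inAdd {S : DGSetup k C} {W X : C} {n : ℤ} (hX : inAdd W X) (h : auxPd S W n) :
    auxPd S X n := by
  obtain ⟨m, s, p, hsp⟩ := hX
  intro Z hZ j hj f
  have hp : p ≫ f = 0 := by
    apply biproduct.hom_ext'
    intro b
    rw [comp_zero, ← assoc]
    exact h Z hZ j hj _
  rw [← id_comp f, ← hsp, assoc, hp, comp_zero]

lemma auxPd_per (S : DGSetup k C) : ∀ (n : ℕ) (X : C), X ∈ perInterval S.A n →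
    auxPd S X (n : ℤ) := by
  intro n
  induction n with
  | zero =>
    intro X hX
    have hX' : inAdd (S.A⟦(0 : ℤ)⟧) X := hX
    exact auxPd_inAdd hX' (auxPd_mono (auxPd_shift (auxPd_A S) 0) (by omega))
  | succ n ih =>
    rintro X ⟨X₁, hX₁, Q, hQ, f, g, h, hT⟩
    have hQpd : auxPd S Q ((n : ℤ) + 1) :=
      auxPd_inAdd hQ (auxPd_mono (auxPd_shift (auxPd_A S) ((n : ℤ) + 1)) (by omega))
    intro Z hZ j hj f'
    have h1 : f ≫ f' = 0 := ih X₁ hX₁ Z hZ j (by push_cast at hj ⊢; omega) _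
    obtain ⟨g', hg'⟩ := Triangle.yoneda_exact₂ _ hT f' h1
    rw [hg', hQpd Z hZ j (by push_cast at hj ⊢; omega) g']; exact comp_zero

/-- Vanishing of `Hom(A, X⟦k⟧)` for `k ≥ 1`. -/
def auxCa (S : DGSetup k C) (X : C) : Prop :=
  ∀ j : ℤ, 1 ≤ j → ∀ f : S.A ⟶ X⟦j⟧, f = 0

lemma auxLE0_of_ca {S : DGSetup k C} {X : C} (hX : auxCa S X) : S.t.le 0 X := by
  obtain ⟨W, V, hW, hV, a, b, c, hT⟩ := S.t.exists_triangle_zero_one X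
  have hViso : IsZero V := by
    apply S.generates
    intro j f
    have key : ∀ g : S.A ⟶ V⟦-j⟧, g = 0 := by
      intro g
      by_cases hjpos : 1 ≤ -j
      · set T' := (Triangle.shiftFunctor C (-j)).obj (Triangle.mk a b c) with hT'def
        have hT' : T' ∈ distTriang C := Triangle.shift_distinguished _ hT (-j)
        have hWle : S.t.le 0 (W⟦-j⟧) :=
          auxLEmono S (by omega) (S.t.le_shift 0 (-j) j (by ring) W hW)
        have hg3 : g ≫ T'.mor₃ = 0 := auxPd_A S (W⟦-j⟧) hWle 1 one_pos _
        obtain ⟨g', hgg⟩ := Triangle.coyoneda_exact₃ _ hT' g hg3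
        rw [hgg, hX (-j) hjpos g']; exact zero_comp
      · have hge : S.t.ge 1 (V⟦-j⟧) :=
          S.t.ge_antitone (by omega) _ (S.t.ge_shift 1 (-j) (1 + j) (by ring) V hV)
        exact S.t.zero' g S.connective hge
    have h0 : (shiftFunctor C (-j)).map f = 0 := by
      have e1 := (shiftFunctorCompIsoId C j (-j) (add_neg_cancel j)).app S.A
      have hk := key (e1.inv ≫ (shiftFunctor C (-j)).map f)
      calc (shiftFunctor C (-j)).map f
          = e1.hom ≫ (e1.inv ≫ (shiftFunctor C (-j)).map f) := by simp
        _ = 0 := by rw [hk, comp_zero]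
    exact (shiftFunctor C (-j)).map_injective (by rw [h0, CategoryTheory.Functor.map_zero])
  have hiso : IsIso a := Triangle.isZero₃_iff_isIso₁ _ hT |>.1 hViso
  exact ((S.t.le 0).prop_iff_of_iso (asIso a)).1 hW

lemma auxCa_per (S : DGSetup k C) : ∀ (n : ℕ) (X : C), X ∈ perInterval S.A n →
    auxCa S X := by
  intro n
  induction n with
  | zero =>
    intro X hX j hj f
    have hX' : inAdd (S.A⟦(0 : ℤ)⟧) X := hX
    refine hom_to_inAdd_zero hX' (fun g => ?_) f
    refine comp_iso_zero ((shiftFunctorAdd' C 0 j j (zero_add j)).symm.app S.A) ?_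
    exact auxPd_A S S.A S.connective j (by omega) _
  | succ n ih =>
    rintro X ⟨X₁, hX₁, Q, hQ, a, b, c, hT⟩
    intro j hj f
    set T' := (Triangle.shiftFunctor C j).obj (Triangle.mk a b c) with hT'def
    have hT' : T' ∈ distTriang C := Triangle.shift_distinguished _ hT j
    have h2 : f ≫ T'.mor₂ = 0 := by
      refine hom_to_inAdd_zero hQ (fun g => ?_) (f ≫ T'.mor₂)
      refine comp_iso_zero
        ((shiftFunctorAdd' C ((n : ℤ) + 1) j ((n : ℤ) + 1 + j) rfl).symm.app S.A) ?_
      exact auxPd_A S S.A S.connective ((n : ℤ) + 1 + j) (by omega) _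
    obtain ⟨g, hg⟩ := Triangle.coyoneda_exact₂ _ hT' f h2
    rw [hg, ih X₁ hX₁ j hj g]; exact zero_comp

lemma auxLE0_per (S : DGSetup k C) (n : ℕ) (X : C) (hX : X ∈ perInterval S.A n) :
    S.t.le 0 X :=
  auxLE0_of_ca (auxCa_per S n X hX)

/-- Existence of a right `add A`-approximation with connective fiber. -/
lemma auxApprox (S : DGSetup k C) (X : C) (hX : S.t.le 0 X) :
    ∃ (P M : C) (u : M ⟶ P) (q : P ⟶ X) (e : X ⟶ M⟦(1 : ℤ)⟧),
      inAdd S.A P ∧ S.t.le 0 M ∧ (Triangle.mk u q e ∈ distTriang C) ∧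
      ∀ g : S.A ⟶ X, ∃ h : S.A ⟶ P, h ≫ q = g := by
  haveI := S.homFinite S.A X
  set r := Module.finrank k (S.A ⟶ X) with hr
  set bb := Module.finBasis k (S.A ⟶ X) with hbb
  set P : C := ⨁ fun _ : Fin r => S.A with hPdef
  set q : P ⟶ X := biproduct.desc fun jj => bb jj with hq
  obtain ⟨M, u, e, hT⟩ := distinguished_cocone_triangle₁ q
  have hsurj : ∀ g : S.A ⟶ X, ∃ h : S.A ⟶ P, h ≫ q = g := by
    intro g
    refine ⟨∑ jj, bb.repr g jj • biproduct.ι (fun _ : Fin r => S.A) jj, ?_⟩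
    rw [Preadditive.sum_comp]
    simp only [Linear.smul_comp, hq, biproduct.ι_desc]
    exact bb.sum_repr g
  have hPadd : inAdd S.A P := ⟨r, 𝟙 _, 𝟙 _, by simp⟩
  have hMca : auxCa S M := by
    intro j hj f
    rcases eq_or_lt_of_le hj with hj1 | hj2
    · -- j = 1
      obtain rfl : j = 1 := hj1.symm
      have h3 : f ≫ (Triangle.mk u q e).rotate.mor₃ = 0 :=
        hom_to_inAdd_zero hPadd (fun g => auxPd_A S S.A S.connective 1 one_pos g) _
      obtain ⟨g', hg'⟩ := Triangle.coyoneda_exact₃ _ (rot_of_distTriang _ hT) f h3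
      obtain ⟨h, hh⟩ := hsurj g'
      have hz : q ≫ (Triangle.mk u q e).rotate.mor₂ = 0 :=
        comp_distTriang_mor_zero₂₃ _ hT
      rw [hg', ← hh]; exact (assoc h q _).trans ((congrArg (h ≫ ·) hz).trans comp_zero)
    · -- j ≥ 2
      set T' := (Triangle.shiftFunctor C (j - 1)).obj (Triangle.mk u q e) with hT'def
      have hT' : T' ∈ distTriang C := Triangle.shift_distinguished _ hT (j - 1)
      set f' : S.A ⟶ T'.rotate.obj₃ :=
        f ≫ (shiftFunctorAdd' C (j - 1) 1 j (by ring)).hom.app M with hf'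
      have h3 : f' ≫ T'.rotate.mor₃ = 0 := by
        refine hom_to_inAdd_zero (inAdd_shift (j - 1) hPadd) (fun g => ?_)
          (f' ≫ T'.rotate.mor₃)
        refine comp_iso_zero ((shiftFunctorAdd' C (j - 1) 1 j (by ring)).symm.app S.A) ?_
        exact auxPd_A S S.A S.connective j (by omega) _
      obtain ⟨g', hg'⟩ := Triangle.coyoneda_exact₃ _ (rot_of_distTriang _ hT') f' h3
      have hg0 : g' = 0 := auxPd_A S X hX (j - 1) (by omega) g'
      have hf0 : f' = 0 := by rw [hg', hg0, zero_comp]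
      have : f = f' ≫ (shiftFunctorAdd' C (j - 1) 1 j (by ring)).inv.app M := by
        rw [hf']; exact ((assoc _ _ _).trans ((congrArg (f ≫ ·) (Iso.hom_inv_id_app _ M)).trans (comp_id f))).symm
      rw [this, hf0]; exact zero_comp
  exact ⟨P, M, u, q, e, hPadd, auxLE0_of_ca hMca, hT, hsurj⟩

lemma auxPd_fiber {S : DGSetup k C} {M P X : C} {u : M ⟶ P} {q : P ⟶ X}
    {e : X ⟶ M⟦(1 : ℤ)⟧} (hT : Triangle.mk u q e ∈ distTriang C) (hP : inAdd S.A P)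
    {m : ℤ} (hm : 1 ≤ m) (hX : auxPd S X m) : auxPd S M (m - 1) := by
  intro Z hZ j hj f
  have h1 : (Triangle.mk u q e).invRotate.mor₁ ≫ f = 0 :=
    auxPd_shift hX (-1) Z hZ j (by omega) _
  obtain ⟨g, hg⟩ := Triangle.yoneda_exact₂ _ (inv_rot_of_distTriang _ hT) f h1
  rw [hg, auxPd_inAdd hP (auxPd_A S) Z hZ j (by omega) g]; exact comp_zero

lemma auxSplit (S : DGSetup k C) {N : C} (hN : S.t.le 0 N) (h0 : auxPd S N 0) :
    inAdd S.A N := by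
  obtain ⟨P, M, u, q, e, hP, hM, hT, -⟩ := auxApprox S N hN
  have he : e = 0 := h0 M hM 1 one_pos e
  obtain ⟨s, hs⟩ := Triangle.coyoneda_exact₃ _ hT (𝟙 N) (by
    have : (Triangle.mk u q e).mor₃ = 0 := he
    rw [this]; exact comp_zero)
  exact inAdd_of_retract s q hs.symm hP

lemma auxFactor (S : DGSetup k C) : ∀ (n : ℕ) (X : C), S.t.le 0 X →
    ∃ (N : C) (φ : X ⟶ N⟦(n : ℤ)⟧), S.t.le 0 N ∧
      (∀ m : ℤ, (n : ℤ) ≤ m → auxPd S X m → auxPd S N (m - n)) ∧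
      (∀ Z : C, S.t.le 0 Z → ∀ f : X ⟶ Z⟦(n : ℤ)⟧,
        ∃ g : N⟦(n : ℤ)⟧ ⟶ Z⟦(n : ℤ)⟧, f = φ ≫ g) := by
  intro n
  induction n with
  | zero =>
    intro X hX
    simp only [Nat.cast_zero]
    refine ⟨X, (shiftFunctorZero C ℤ).inv.app X, hX, ?_, ?_⟩
    · intro m hm hpd
      rw [sub_zero]
      exact hpd
    · intro Z hZ f
      refine ⟨(shiftFunctorZero C ℤ).hom.app X ≫ f, ?_⟩
      rw [← assoc]
      simp
  | succ n ih =>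
    intro X hX
    obtain ⟨P, M, u, q, e, hP, hM, hT, hsurj⟩ := auxApprox S X hX
    obtain ⟨N, ψ, hN, hb, ha⟩ := ih M hM
    have hc : ((n + 1 : ℕ) : ℤ) = (n : ℤ) + 1 := by push_cast; ring
    rw [hc]
    set ι := (shiftFunctorAdd' C (n : ℤ) 1 ((n : ℤ) + 1) rfl).symm.app N with hι
    refine ⟨N, e ≫ ψ⟦(1 : ℤ)⟧' ≫ ι.hom, hN, ?_, ?_⟩
    · intro m hm hpd
      have h1 : auxPd S M (m - 1) := auxPd_fiber hT hP (by omega) hpd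
      have h2 := hb (m - 1) (by omega) h1
      have h3 : m - 1 - (n : ℤ) = m - ((n : ℤ) + 1) := by ring
      rwa [h3] at h2
    · intro Z hZ f
      have hq : q ≫ f = 0 := auxPd_inAdd hP (auxPd_A S) Z hZ ((n : ℤ) + 1) (by omega) _
      obtain ⟨g₁, hg₁⟩ : ∃ g₁ : M⟦(1 : ℤ)⟧ ⟶ Z⟦(n : ℤ) + 1⟧, f = e ≫ g₁ :=
          Triangle.yoneda_exact₃ _ hT f hq
      set κ := (shiftFunctorAdd' C (n : ℤ) 1 ((n : ℤ) + 1) rfl).symm.app Z with hκ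
      set g₀ := (shiftFunctor C (1 : ℤ)).preimage (g₁ ≫ κ.inv) with hg₀
      obtain ⟨h₂, hh₂⟩ := ha Z hZ g₀
      refine ⟨ι.inv ≫ h₂⟦(1 : ℤ)⟧' ≫ κ.hom, ?_⟩
      have hmap : (shiftFunctor C (1 : ℤ)).map g₀ = g₁ ≫ κ.inv :=
        CategoryTheory.Functor.map_preimage _ _
      rw [hg₁]
      calc e ≫ g₁
          = e ≫ (g₁ ≫ κ.inv) ≫ κ.hom := by
            rw [assoc, Iso.inv_hom_id, comp_id]
        _ = e ≫ (shiftFunctor C (1 : ℤ)).map g₀ ≫ κ.hom := by rw [hmap]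
        _ = e ≫ (ψ ≫ h₂)⟦(1 : ℤ)⟧' ≫ κ.hom := by rw [← hh₂]
        _ = e ≫ ψ⟦(1 : ℤ)⟧' ≫ h₂⟦(1 : ℤ)⟧' ≫ κ.hom := by
            rw [CategoryTheory.Functor.map_comp, assoc]
        _ = (e ≫ ψ⟦(1 : ℤ)⟧' ≫ ι.hom) ≫ ι.inv ≫ h₂⟦(1 : ℤ)⟧' ≫ κ.hom := by
            simp

lemma auxPeel (S : DGSetup k C) (n : ℕ) (hn : 1 ≤ n) (X : C) (hX : S.t.le 0 X)
    (hpd : auxPd S X (n : ℤ)) :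
    ∃ (N Y : C) (φ : X ⟶ N⟦(n : ℤ)⟧) (v : Y ⟶ X) (w : N⟦(n : ℤ)⟧ ⟶ Y⟦(1 : ℤ)⟧),
      inAdd S.A N ∧ (Triangle.mk v φ w ∈ distTriang C) ∧ S.t.le 0 Y ∧
      auxPd S Y ((n : ℤ) - 1) := by
  obtain ⟨N, φ, hN, hb, ha⟩ := auxFactor S n X hX
  have hN0 : auxPd S N 0 := by
    have h := hb (n : ℤ) le_rfl hpd
    rwa [sub_self] at h
  have hNA : inAdd S.A N := auxSplit S hN hN0
  obtain ⟨Y, v, w, hTf⟩ := distinguished_cocone_triangle₁ φ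
  have hYca : auxCa S Y := by
    intro j hj f
    set T' := (Triangle.shiftFunctor C j).obj (Triangle.mk v φ w) with hT'def
    have hT' : T' ∈ distTriang C := Triangle.shift_distinguished _ hTf j
    have h2 : f ≫ T'.invRotate.mor₂ = 0 :=
      auxPd_A S X hX j (by omega) (f ≫ T'.invRotate.mor₂)
    obtain ⟨g, hg⟩ := Triangle.coyoneda_exact₂ _ (inv_rot_of_distTriang _ hT') f h2
    have hg0 : g = 0 := by
      refine comp_iso_zero ((shiftFunctorAdd' C j (-1) (j - 1) (by ring)).symm.app
        (N⟦(n : ℤ)⟧)) ?_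
      refine comp_iso_zero ((shiftFunctorAdd' C (n : ℤ) (j - 1) ((n : ℤ) + (j - 1))
        rfl).symm.app N) ?_
      refine (assoc _ _ _).trans ?_
      exact auxPd_A S N hN ((n : ℤ) + (j - 1)) (by omega) _
    rw [hg, hg0]; exact zero_comp
  have hY0 : S.t.le 0 Y := auxLE0_of_ca hYca
  have hYpd : auxPd S Y ((n : ℤ) - 1) := by
    intro Z hZ j hj f'
    have h1 : (Triangle.mk v φ w).invRotate.mor₁ ≫ f' = 0 :=
      auxPd_shift (auxPd_shift hN0 (n : ℤ)) (-1) Z hZ j (by omega) _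
    obtain ⟨f, hf⟩ := Triangle.yoneda_exact₂ _ (inv_rot_of_distTriang _ hTf) f' h1
    by_cases hcase : (n : ℤ) < j
    · rw [hf, hpd Z hZ j hcase f]; exact comp_zero
    · have hj' : j = (n : ℤ) := by omega
      subst hj'
      obtain ⟨g, hg⟩ := ha Z hZ f
      have hvφ : v ≫ φ = 0 := comp_distTriang_mor_zero₁₂ _ hTf
      have hm2 : (Triangle.mk v φ w).invRotate.mor₂ = v := rfl
      rw [hf, hm2, hg]; exact (assoc v φ g).symm.trans (by rw [hvφ, zero_comp])
  exact ⟨N, Y, φ, v, w, hNA, hTf, hY0, hYpd⟩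

lemma auxPerSucc (S : DGSetup k C) (n : ℕ) {X : C} (hX : X ∈ perInterval S.A n) :
    X ∈ perInterval S.A (n + 1) :=
  ⟨X, hX, 0, inAdd_zero _, 𝟙 X, 0, 0, contractible_distinguished X⟩

lemma auxPerLe (S : DGSetup k C) {m n : ℕ} (h : m ≤ n) {X : C}
    (hX : X ∈ perInterval S.A m) : X ∈ perInterval S.A n := by
  induction h with
  | refl => exact hX
  | step _ ih => exact auxPerSucc S _ ih

lemma auxZeroMem (S : DGSetup k C) (n : ℕ) : (0 : C) ∈ perInterval S.A n :=
  auxPerLe S (Nat.zero_le n) (inAdd_zero _)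

lemma auxAddShiftPer (S : DGSetup k C) : ∀ (i : ℕ) (X : C),
    inAdd (S.A⟦(i : ℤ)⟧) X → X ∈ perInterval S.A i := by
  intro i X hX
  cases i with
  | zero =>
    exact inAdd_congr (eqToIso (by norm_num)) hX
  | succ n =>
    refine ⟨0, auxZeroMem S n, X, ?_, 0, 𝟙 X, 0, contractible_distinguished₁ X⟩
    exact inAdd_congr (eqToIso (by push_cast; ring_nf)) hX

lemma auxMaster (S : DGSetup k C) : ∀ (n : ℕ) (X : C), S.t.le 0 X →
    auxPd S X (n : ℤ) → X ∈ perInterval S.A n := by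
  intro n
  induction n with
  | zero =>
    intro X hX hpd
    have h1 : inAdd S.A X := auxSplit S hX (by rwa [Nat.cast_zero] at hpd)
    exact inAdd_congr (((shiftFunctorZero C ℤ).app S.A).symm) h1
  | succ n ih =>
    intro X hX hpd
    obtain ⟨N, Y, φ, v, w, hNA, hTf, hY0, hYpd⟩ := auxPeel S (n + 1) (by omega) X hX hpd
    have hcast : ((n + 1 : ℕ) : ℤ) - 1 = (n : ℤ) := by push_cast; ring
    have hYper : Y ∈ perInterval S.A n := ih Y hY0 (by rwa [hcast] at hYpd)
    refine ⟨Y, hYper, N⟦((n + 1 : ℕ) : ℤ)⟧, ?_, v, φ, w, hTf⟩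
    have h1 : inAdd (S.A⟦((n + 1 : ℕ) : ℤ)⟧) (N⟦((n + 1 : ℕ) : ℤ)⟧) :=
      inAdd_shift _ hNA
    exact inAdd_congr (eqToIso (by push_cast; ring_nf)) h1

lemma auxPerShift (S : DGSetup k C) : ∀ (n : ℕ) (X : C), X ∈ perInterval S.A n →
    X⟦(1 : ℤ)⟧ ∈ perInterval S.A (n + 1) := by
  intro n
  induction n with
  | zero =>
    intro X hX
    have hX' : inAdd (S.A⟦(0 : ℤ)⟧) X := hX
    have h1 : inAdd ((S.A⟦(0 : ℤ)⟧)⟦(1 : ℤ)⟧) (X⟦(1 : ℤ)⟧) := inAdd_shift 1 hX'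
    have h2 : inAdd (S.A⟦((0 : ℕ) : ℤ) + 1⟧) (X⟦(1 : ℤ)⟧) :=
      inAdd_congr ((shiftFunctorAdd' C 0 1 (((0 : ℕ) : ℤ) + 1)
        (by norm_num)).symm.app S.A) h1
    exact ⟨0, inAdd_zero _, X⟦(1 : ℤ)⟧, h2, 0, 𝟙 _, 0, contractible_distinguished₁ _⟩
  | succ n ih =>
    rintro X ⟨X₁, hX₁, Q, hQ, a, b, c, hT⟩
    set T' := (Triangle.shiftFunctor C (1 : ℤ)).obj (Triangle.mk a b c) with hT'def
    refine ⟨X₁⟦(1 : ℤ)⟧, ih X₁ hX₁, Q⟦(1 : ℤ)⟧, ?_, T'.mor₁, T'.mor₂, T'.mor₃,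
      Triangle.shift_distinguished _ hT 1⟩
    have h1 : inAdd ((S.A⟦(n : ℤ) + 1⟧)⟦(1 : ℤ)⟧) (Q⟦(1 : ℤ)⟧) := inAdd_shift 1 hQ
    exact inAdd_congr ((shiftFunctorAdd' C ((n : ℤ) + 1) 1 (((n + 1 : ℕ) : ℤ) + 1)
      (by push_cast; ring)).symm.app S.A) h1

end Aux

/-- `per(A)^{[-d,0]}` is a `(d-1)`-Auslander extriangulated category:
it has enough projectives and enough injectives, positive global dimension at most `d`
(higher extensions `Hom(X, Y⟦k⟧)` vanish for `k > d`), and dominant dimension at least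
`d`: each projective `P ∈ add(A)` has a minimal injective coresolution given by the
conflations `P⟦i⟧ ↣ 0 ↠ P⟦i+1⟧` (for `0 ≤ i < d`) and `P⟦d⟧ ↣ P⟦d⟧ ↠ 0`, whose first
`d` terms (the zero object) are projective-injective. -/
theorem stmt18 (S : DGSetup k C) (d : ℕ) (hd : 1 ≤ d) :
    -- enough projectives
    (∀ X ∈ perInterval S.A d, ∃ (P : C) (_ : inAdd S.A P) (p : P ⟶ X),
      isDeflation (perInterval S.A d) p) ∧
    -- enough injectives
    (∀ X ∈ perInterval S.A d, ∃ (I : C) (_ : inAdd (S.A⟦(d : ℤ)⟧) I) (i : X ⟶ I),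
      isInflation (perInterval S.A d) i) ∧
    -- positive global dimension at most d
    (∀ X ∈ perInterval S.A d, ∀ Y ∈ perInterval S.A d, ∀ k : ℤ, (d : ℤ) < k →
      ∀ f : X ⟶ Y⟦k⟧, f = 0) ∧
    -- the zero object is projective-injective
    projOn (perInterval S.A d) (0 : C) ∧ injOn (perInterval S.A d) (0 : C) ∧
    -- dominant dimension at least d, via the explicit minimal injective coresolution
    (∀ P : C, inAdd S.A P →
      (∀ i : ℕ, i ≤ d → P⟦(i : ℤ)⟧ ∈ perInterval S.A d) ∧
      (∀ i : ℕ, i < d → ∃ h : P⟦(i : ℤ) + 1⟧ ⟶ (P⟦(i : ℤ)⟧)⟦(1 : ℤ)⟧,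
        Triangle.mk (0 : P⟦(i : ℤ)⟧ ⟶ (0 : C)) (0 : (0 : C) ⟶ P⟦(i : ℤ) + 1⟧) h ∈
          distTriang C) ∧
      injOn (perInterval S.A d) (P⟦(d : ℤ)⟧)) := by
  refine ⟨?_, ?_, ?_, ?_, ?_, ?_⟩
  · -- enough projectives
    intro X hX
    obtain ⟨P, M, u, q, e, hP, hM, hT, -⟩ := auxApprox S X (auxLE0_per S d X hX)
    have hMpd : auxPd S M ((d : ℤ) - 1) :=
      auxPd_fiber hT hP (by omega) (auxPd_per S d X hX)
    have hcast : ((d - 1 : ℕ) : ℤ) = (d : ℤ) - 1 := by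
      rw [Nat.cast_sub hd]; norm_num
    have hMper : M ∈ perInterval S.A d :=
      auxPerLe S (Nat.sub_le d 1)
        (auxMaster S (d - 1) M hM (by rwa [hcast]))
    exact ⟨P, hP, q, M, hMper, u, e, hT⟩
  · -- enough injectives
    intro X hX
    obtain ⟨N, Y, φ, v, w, hNA, hTf, hY0, hYpd⟩ :=
      auxPeel S d hd X (auxLE0_per S d X hX) (auxPd_per S d X hX)
    have hcast : ((d - 1 : ℕ) : ℤ) = (d : ℤ) - 1 := by
      rw [Nat.cast_sub hd]; norm_num
    have hYper : Y ∈ perInterval S.A (d - 1) :=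
      auxMaster S (d - 1) Y hY0 (by rwa [hcast])
    have hY1 : Y⟦(1 : ℤ)⟧ ∈ perInterval S.A d := by
      have := auxPerShift S (d - 1) Y hYper
      rwa [Nat.sub_add_cancel hd] at this
    exact ⟨N⟦(d : ℤ)⟧, inAdd_shift _ hNA, φ, Y⟦(1 : ℤ)⟧, hY1, w, -(v⟦(1 : ℤ)⟧'),
      rot_of_distTriang _ hTf⟩
  · -- global dimension
    intro X hX Y hY kk hkk f
    exact auxPd_per S d X hX Y (auxLE0_per S d Y hY) kk hkk f
  · -- 0 is projective
    intro X _ f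
    exact (isZero_zero C).eq_of_src f 0
  · -- 0 is injective
    intro X _ f
    exact (CategoryTheory.Functor.map_isZero _ (isZero_zero C)).eq_of_tgt f 0
  · -- dominant dimension
    intro P hP
    refine ⟨?_, ?_, ?_⟩
    · intro i hi
      exact auxPerLe S hi (auxAddShiftPer S i _ (inAdd_shift _ hP))
    · intro i _
      set E := (shiftFunctorAdd' C (i : ℤ) 1 ((i : ℤ) + 1) rfl).app P with hE
      refine ⟨-E.hom, ?_⟩
      refine isomorphic_distinguished _
        (rot_of_distTriang _ (contractible_distinguished (P⟦(i : ℤ)⟧))) _ ?_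
      refine Triangle.isoMk _ _ (Iso.refl _) (Iso.refl _) E ?_ ?_ ?_
      · exact zero_comp.trans comp_zero.symm
      · exact zero_comp.trans comp_zero.symm
      · change (-E.hom) ≫ (shiftFunctor C 1).map (𝟙 ((shiftFunctor C (i : ℤ)).obj P)) =
          E.hom ≫ (-(shiftFunctor C 1).map (𝟙 ((shiftFunctor C (i : ℤ)).obj P)))
        rw [CategoryTheory.Functor.map_id, Preadditive.neg_comp, Preadditive.comp_neg]
    · intro X hX f
      refine hom_to_inAdd_zero (inAdd_shift (d : ℤ) hP) (fun g => ?_) f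
      refine comp_iso_zero ((shiftFunctorAdd' C (d : ℤ) 1 ((d : ℤ) + 1) rfl).symm.app S.A) ?_
      exact auxPd_per S d X hX S.A S.connective ((d : ℤ) + 1) (by omega) _

end Paper
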